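/- For natural numbers k, j with j ≥ k, define μ̂_{k,j} = (2k+1)! j! / (k! (j-k)! (k+j+1)!) and d̂_k = (k!)² / ((2k)!(2k+1)!). Then for all i, j ∈ ℕ: ∑_{k=0}^{min(i,j)} d̂_k μ̂_{k,i} μ̂_{k,j} = 1/(i! · j! · (i+j+1)). -/

import Mathlib

private def hilbF (i j k : ℕ) : ℚ :=
  if k ≤ i ∧ k ≤ j then
    ((Nat.factorial i : ℚ) * (Nat.factorial j : ℚ)) /
      ((Nat.factorial (i - k) : ℚ) * (Nat.factorial (i + k) : ℚ) *
        (Nat.factorial (j - k) : ℚ) * (Nat.factorial (j + k) : ℚ))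
  else 0

private lemma fact_ne (n : ℕ) : (Nat.factorial n : ℚ) ≠ 0 :=
  Nat.cast_ne_zero.mpr (Nat.factorial_pos n).ne'

private lemma hilbF_succ (k a b : ℕ) :
    hilbF (k + a) (k + b) (k + 1) =
      (a : ℚ) * (b : ℚ) *
          ((Nat.factorial (k + a) : ℚ) * (Nat.factorial (k + b) : ℚ)) /
        ((Nat.factorial a : ℚ) * (Nat.factorial (2 * k + a + 1) : ℚ) *
          (Nat.factorial b : ℚ) * (Nat.factorial (2 * k + b + 1) : ℚ)) := by
  rcases a with _ | a
  · rw [hilbF, if_neg (by omega)]; push_cast; ring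
  rcases b with _ | b
  · rw [hilbF, if_neg (by omega)]; push_cast; ring
  rw [hilbF, if_pos ⟨by omega, by omega⟩]
  rw [show k + (a + 1) - (k + 1) = a by omega, show k + (b + 1) - (k + 1) = b by omega,
    show k + (a + 1) + (k + 1) = 2 * k + (a + 1) + 1 by ring,
    show k + (b + 1) + (k + 1) = 2 * k + (b + 1) + 1 by ring,
    Nat.factorial_succ a, Nat.factorial_succ b]
  push_cast
  have h1 := fact_ne a
  have h2 := fact_ne b
  have h3 := fact_ne (2 * k + (a + 1) + 1)
  have h4 := fact_ne (2 * k + (b + 1) + 1)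
  have h5 : ((a : ℚ) + 1) ≠ 0 := by positivity
  have h6 : ((b : ℚ) + 1) ≠ 0 := by positivity
  field_simp

private lemma hilb_step (k a b : ℕ) :
    ((Nat.factorial k : ℚ) ^ 2 /
            ((Nat.factorial (2 * k) : ℚ) * (Nat.factorial (2 * k + 1) : ℚ))) *
          ((Nat.factorial (2 * k + 1) : ℚ) * (Nat.factorial (k + a) : ℚ) /
            ((Nat.factorial k : ℚ) * (Nat.factorial (k + a - k) : ℚ) *
              (Nat.factorial (k + (k + a) + 1) : ℚ))) *
          ((Nat.factorial (2 * k + 1) : ℚ) * (Nat.factorial (k + b) : ℚ) /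
            ((Nat.factorial k : ℚ) * (Nat.factorial (k + b - k) : ℚ) *
              (Nat.factorial (k + (k + b) + 1) : ℚ))) =
      (hilbF (k + a) (k + b) k - hilbF (k + a) (k + b) (k + 1)) / (((k + a : ℕ) : ℚ) + ((k + b : ℕ) : ℚ) + 1) := by
  rw [hilbF_succ, hilbF, if_pos ⟨by omega, by omega⟩]
  rw [show k + a - k = a by omega, show k + b - k = b by omega,
    show k + (k + a) + 1 = (2 * k + a) + 1 by ring,
    show k + (k + b) + 1 = (2 * k + b) + 1 by ring,
    show k + a + k = 2 * k + a by ring, show k + b + k = 2 * k + b by ring,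
    show 2 * k + a + 1 = (2 * k + a) + 1 from rfl,
    show 2 * k + b + 1 = (2 * k + b) + 1 from rfl,
    show 2 * k + 1 = (2 * k) + 1 from rfl,
    Nat.factorial_succ (2 * k + a), Nat.factorial_succ (2 * k + b),
    Nat.factorial_succ (2 * k)]
  have h1 := fact_ne a
  have h2 := fact_ne b
  have h3 := fact_ne k
  have h4 := fact_ne (2 * k)
  have h5 := fact_ne (2 * k + a)
  have h6 := fact_ne (2 * k + b)
  have h7 : ((2 * k : ℚ) + a + 1) ≠ 0 := by positivity
  have h8 : ((2 * k : ℚ) + b + 1) ≠ 0 := by positivity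
  have h9 : ((2 * k : ℚ) + 1) ≠ 0 := by positivity
  have h10 : ((k : ℚ) + a + ((k : ℚ) + b) + 1) ≠ 0 := by positivity
  push_cast
  field_simp
  ring

theorem hilbert_entry_identity (i j : ℕ) :
    ∑ k ∈ Finset.range (min i j + 1),
        ((Nat.factorial k : ℚ) ^ 2 /
            ((Nat.factorial (2 * k) : ℚ) * (Nat.factorial (2 * k + 1) : ℚ))) *
          ((Nat.factorial (2 * k + 1) : ℚ) * (Nat.factorial i : ℚ) /
            ((Nat.factorial k : ℚ) * (Nat.factorial (i - k) : ℚ) *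
              (Nat.factorial (k + i + 1) : ℚ))) *
          ((Nat.factorial (2 * k + 1) : ℚ) * (Nat.factorial j : ℚ) /
            ((Nat.factorial k : ℚ) * (Nat.factorial (j - k) : ℚ) *
              (Nat.factorial (k + j + 1) : ℚ))) =
      1 / ((Nat.factorial i : ℚ) * (Nat.factorial j : ℚ) * (i + j + 1)) := by
  have key : ∀ k ∈ Finset.range (min i j + 1),
      ((Nat.factorial k : ℚ) ^ 2 /
            ((Nat.factorial (2 * k) : ℚ) * (Nat.factorial (2 * k + 1) : ℚ))) *
          ((Nat.factorial (2 * k + 1) : ℚ) * (Nat.factorial i : ℚ) /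
            ((Nat.factorial k : ℚ) * (Nat.factorial (i - k) : ℚ) *
              (Nat.factorial (k + i + 1) : ℚ))) *
          ((Nat.factorial (2 * k + 1) : ℚ) * (Nat.factorial j : ℚ) /
            ((Nat.factorial k : ℚ) * (Nat.factorial (j - k) : ℚ) *
              (Nat.factorial (k + j + 1) : ℚ))) =
        (hilbF i j k - hilbF i j (k + 1)) / ((i : ℚ) + j + 1) := by
    intro k hk
    rw [Finset.mem_range] at hk
    obtain ⟨a, rfl⟩ : ∃ a, i = k + a := ⟨i - k, by omega⟩
    obtain ⟨b, rfl⟩ : ∃ b, j = k + b := ⟨j - k, by omega⟩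
    exact hilb_step k a b
  rw [Finset.sum_congr rfl key, ← Finset.sum_div, Finset.sum_range_sub']
  rw [show hilbF i j (min i j + 1) = 0 from by rw [hilbF, if_neg (by omega)]]
  rw [hilbF, if_pos ⟨Nat.zero_le i, Nat.zero_le j⟩]
  simp only [Nat.sub_zero, Nat.add_zero]
  have h1 := fact_ne i
  have h2 := fact_ne j
  have h3 : ((i : ℚ) + j + 1) ≠ 0 := by positivity
  field_simp
  ring
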